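/- Let s ≥ 6, H = K_s, and p = n^{−2/(s+1)} with n > 1. For any two distinct edges uv, xy of H, set H⁻ = H ∖ uv. Then the pair ({x,y}, H⁻) is strictly balanced: S_{xy,H⁻} = p^{−1} and S_{xy,H⁻[B]} > p^{−1} for all B with {x,y} ⊊ B ⊊ V_H. In particular S_{xy,H⁻[B]} ≥ p²n > p^{−1} for such B. -/

import Mathlib

/-- `S_{A,Γ} = p^(e_Γ - e_{Γ[A]}) * n^(v_Γ - |A|)`, the extension scaling. -/
noncomputable def scalingPair {V : Type*} [Fintype V] (n p : ℝ)
    (Γ : SimpleGraph V) (A : Set V) : ℝ :=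
  p ^ (Γ.edgeSet.ncard - (Γ.induce A).edgeSet.ncard) *
    n ^ (Fintype.card V - A.ncard)

/-- `S_{A,Γ[B]}`, the extension scaling within the induced subgraph on `B`. -/
noncomputable def scalingInd {V : Type*} [Fintype V] (n p : ℝ)
    (Γ : SimpleGraph V) (A B : Set V) : ℝ :=
  p ^ ((Γ.induce B).edgeSet.ncard - (Γ.induce A).edgeSet.ncard) *
    n ^ (B.ncard - A.ncard)

open SimpleGraph
open scoped Classical

lemma two_mul_choose_two (m : ℕ) : 2 * m.choose 2 = m * (m - 1) := by
  rw [Nat.choose_two_right, Nat.mul_div_cancel' (Nat.even_mul_pred_self m).two_dvd]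

lemma top_ncard (α : Type*) [Fintype α] :
    (⊤ : SimpleGraph α).edgeSet.ncard = (Fintype.card α).choose 2 := by
  classical
  rw [← SimpleGraph.card_edgeFinset_top_eq_card_choose_two, SimpleGraph.edgeFinset,
    Set.ncard_eq_toFinset_card']

lemma induce_count {s : ℕ} (u v : Fin s) (huv : u ≠ v) (B : Set (Fin s)) :
    ((((⊤ : SimpleGraph (Fin s)).deleteEdges {s(u, v)}).induce B).edgeSet).ncard
      = (B.ncard).choose 2 - (if u ∈ B ∧ v ∈ B then 1 else 0) := by
  classical
  set D : Set (Sym2 B) := Sym2.map Subtype.val ⁻¹' {s(u, v)} with hD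
  have hind : ((⊤ : SimpleGraph (Fin s)).deleteEdges {s(u, v)}).induce B
      = (⊤ : SimpleGraph B).deleteEdges D := by
    ext a b
    simp only [comap_adj, Function.Embedding.coe_subtype, deleteEdges_adj, top_adj,
      Set.mem_singleton_iff, hD, Set.mem_preimage, Sym2.map_pair_eq]
    constructor
    · rintro ⟨h1, h2⟩; exact ⟨Subtype.coe_ne_coe.mp h1, h2⟩
    · rintro ⟨h1, h2⟩; exact ⟨Subtype.coe_ne_coe.mpr h1, h2⟩
  have htopcard : (⊤ : SimpleGraph B).edgeSet.ncard = (B.ncard).choose 2 := by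
    rw [top_ncard, ← Nat.card_coe_set_eq, Nat.card_eq_fintype_card]
  rw [hind, edgeSet_deleteEdges]
  by_cases huvB : u ∈ B ∧ v ∈ B
  · obtain ⟨hu, hv⟩ := huvB
    have hDeq : D = {s((⟨u, hu⟩ : B), (⟨v, hv⟩ : B))} := by
      ext e
      induction e using Sym2.ind with
      | _ a b =>
        simp only [hD, Set.mem_preimage, Sym2.map_pair_eq, Set.mem_singleton_iff,
          Sym2.eq_iff]
        constructor
        · rintro (⟨h1, h2⟩ | ⟨h1, h2⟩)
          · exact Or.inl ⟨Subtype.ext h1, Subtype.ext h2⟩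
          · exact Or.inr ⟨Subtype.ext h1, Subtype.ext h2⟩
        · rintro (⟨h1, h2⟩ | ⟨h1, h2⟩)
          · exact Or.inl ⟨congrArg _ h1, congrArg _ h2⟩
          · exact Or.inr ⟨congrArg _ h1, congrArg _ h2⟩
    have hmem : s((⟨u, hu⟩ : B), (⟨v, hv⟩ : B)) ∈ (⊤ : SimpleGraph B).edgeSet := by
      simp only [mem_edgeSet, top_adj, ne_eq]
      exact fun h => huv (congrArg Subtype.val h)
    rw [hDeq, if_pos ⟨hu, hv⟩, Set.ncard_diff_singleton_of_mem hmem,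
      htopcard]
  · have hDeq : D = ∅ := by
      ext e
      induction e using Sym2.ind with
      | _ a b =>
        simp only [hD, Set.mem_preimage, Sym2.map_pair_eq, Set.mem_singleton_iff,
          Sym2.eq_iff, Set.mem_empty_iff_false, iff_false]
        rintro (⟨h1, h2⟩ | ⟨h1, h2⟩)
        · exact huvB ⟨h1 ▸ a.2, h2 ▸ b.2⟩
        · exact huvB ⟨h2 ▸ b.2, h1 ▸ a.2⟩
    rw [hDeq, if_neg huvB, Set.diff_empty, htopcard, Nat.sub_zero]

lemma pw (n p r : ℝ) (hn : 0 < n) (hp : p = n ^ r) (k m : ℕ) :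
    p ^ k * n ^ m = n ^ (r * k + m) := by
  rw [hp, ← Real.rpow_natCast (n ^ r) k, ← Real.rpow_mul hn.le, ← Real.rpow_natCast n m,
    ← Real.rpow_add hn]

theorem stmt_13 (s : ℕ) (hs : 6 ≤ s) (n : ℝ) (hn : 1 < n) (p : ℝ)
    (hp : p = n ^ (-(2 / ((s : ℝ) + 1))))
    (u v x y : Fin s) (huv : u ≠ v) (hxy : x ≠ y) (hne : s(u, v) ≠ s(x, y))
    (Hm : SimpleGraph (Fin s))
    (hHm : Hm = (⊤ : SimpleGraph (Fin s)).deleteEdges {s(u, v)}) :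
    scalingPair n p Hm {x, y} = p⁻¹ ∧
    ∀ B : Set (Fin s), ({x, y} : Set (Fin s)) ⊂ B → B ⊂ Set.univ →
      p⁻¹ < scalingInd n p Hm {x, y} B ∧
      p ^ 2 * n ≤ scalingInd n p Hm {x, y} B ∧
      p⁻¹ < p ^ 2 * n := by
  have hn0 : (0:ℝ) < n := lt_trans zero_lt_one hn
  set r : ℝ := -(2 / ((s : ℝ) + 1)) with hr
  have hs6 : (6:ℝ) ≤ (s:ℝ) := by exact_mod_cast hs
  have hq : (0:ℝ) < (s:ℝ) + 1 := by linarith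
  have hpinv : p⁻¹ = n ^ (-r) := by rw [hp, ← Real.rpow_neg hn0.le]
  -- edge count of Hm
  have hc2 : 2 * s.choose 2 = s * (s - 1) := two_mul_choose_two s
  have hcge : 15 ≤ s.choose 2 := by
    have h30 : 30 ≤ 2 * s.choose 2 := by
      rw [hc2]; calc 30 = 6 * 5 := rfl
        _ ≤ s * (s - 1) := Nat.mul_le_mul hs (by omega)
    omega
  have hHmcard : Hm.edgeSet.ncard = s.choose 2 - 1 := by
    rw [hHm, edgeSet_deleteEdges]
    have hmem : s(u,v) ∈ (⊤ : SimpleGraph (Fin s)).edgeSet := by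
      simp [mem_edgeSet, huv]
    rw [Set.ncard_diff_singleton_of_mem hmem, top_ncard, Fintype.card_fin]
  -- induced on {x,y}
  have hnotuvA : ¬(u ∈ ({x,y} : Set (Fin s)) ∧ v ∈ ({x,y} : Set (Fin s))) := by
    rintro ⟨hu, hv⟩
    rcases hu with hu | hu <;> rcases hv with hv | hv <;> subst hu <;> subst hv
    · exact huv rfl
    · exact hne rfl
    · exact hne (Sym2.eq_swap)
    · exact huv rfl
  have hAncard : ({x,y} : Set (Fin s)).ncard = 2 := Set.ncard_pair hxy
  have hAcount : ((Hm.induce ({x,y} : Set (Fin s))).edgeSet).ncard = 1 := by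
    rw [hHm, induce_count u v huv, if_neg hnotuvA, hAncard]
    rfl
  -- cast of choose
  have hccR : 2 * ((s.choose 2 : ℕ) : ℝ) = (s:ℝ) * ((s:ℝ) - 1) := by
    have h1 : ((s * (s-1) : ℕ) : ℝ) = (s:ℝ) * ((s:ℝ) - 1) := by
      push_cast [Nat.cast_sub (by omega : 1 ≤ s)]; ring
    rw [← h1, ← hc2]; push_cast; ring
  constructor
  · -- scalingPair = p⁻¹
    unfold scalingPair
    rw [hHmcard, hAcount, hAncard, Fintype.card_fin, pw n p r hn0 hp, hpinv]
    congr 1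
    have e1 : (((s.choose 2 - 1 - 1 : ℕ)) : ℝ) = ((s.choose 2 : ℕ) : ℝ) - 2 := by
      have : (s.choose 2 - 1 - 1 : ℕ) = s.choose 2 - 2 := by omega
      rw [this, Nat.cast_sub (by omega)]; norm_num
    have e2 : (((s - 2 : ℕ)) : ℝ) = (s:ℝ) - 2 := by
      rw [Nat.cast_sub (by omega)]; norm_num
    rw [e1, e2, hr]
    field_simp
    nlinarith [hccR]
  · intro B hAB hBu
    have hBfin : B.Finite := Set.toFinite _
    have hb3 : 3 ≤ B.ncard := by
      have := Set.ncard_lt_ncard hAB hBfin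
      rw [hAncard] at this
      omega
    have hbs : B.ncard < s := by
      have := Set.ncard_lt_ncard hBu (Set.toFinite _)
      rwa [Set.ncard_univ, Nat.card_eq_fintype_card, Fintype.card_fin] at this
    set b := B.ncard with hbdef
    set d : ℕ := if u ∈ B ∧ v ∈ B then 1 else 0 with hd
    have hd1 : d ≤ 1 := by rw [hd]; split <;> omega
    have hcb : 2 * b.choose 2 = b * (b - 1) := two_mul_choose_two b
    have hcb3 : 3 ≤ b.choose 2 := by
      have : 6 ≤ 2 * b.choose 2 := by
        rw [hcb]; calc 6 = 3 * 2 := rfl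
          _ ≤ b * (b-1) := Nat.mul_le_mul hb3 (by omega)
      omega
    have hBcount : ((Hm.induce B).edgeSet).ncard = b.choose 2 - d := by
      rw [hHm, induce_count u v huv]
    have hcbR : 2 * ((b.choose 2 : ℕ) : ℝ) = (b:ℝ) * ((b:ℝ) - 1) := by
      have h1 : ((b * (b-1) : ℕ) : ℝ) = (b:ℝ) * ((b:ℝ) - 1) := by
        push_cast [Nat.cast_sub (by omega : 1 ≤ b)]; ring
      rw [← h1, ← hcb]; push_cast; ring
    have hbR : (3:ℝ) ≤ (b:ℝ) := by exact_mod_cast hb3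
    have hbsR : (b:ℝ) + 1 ≤ (s:ℝ) := by exact_mod_cast hbs
    have hdR0 : (0:ℝ) ≤ (d:ℝ) := by positivity
    have hdR1 : (d:ℝ) ≤ 1 := by exact_mod_cast hd1
    have hSI : scalingInd n p Hm {x,y} B
        = n ^ (r * (((b.choose 2 : ℕ) : ℝ) - d - 1) + ((b:ℝ) - 2)) := by
      unfold scalingInd
      rw [hBcount, hAcount, hAncard, pw n p r hn0 hp]
      congr 1
      have e1 : ((b.choose 2 - d - 1 : ℕ) : ℝ) = ((b.choose 2 : ℕ) : ℝ) - d - 1 := by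
        rw [Nat.cast_sub (by omega), Nat.cast_sub (by omega)]; norm_num
      have e2 : ((b - 2 : ℕ) : ℝ) = (b:ℝ) - 2 := by
        rw [Nat.cast_sub (by omega)]; norm_num
      rw [e1, e2]
    have hP2 : p ^ 2 * n = n ^ (r * 2 + 1) := by
      have := pw n p r hn0 hp 2 1
      rw [pow_one] at this
      rw [this]; norm_num
    have h6 : 6 / ((s:ℝ) + 1) < 1 := by
      rw [div_lt_one hq]; linarith
    have h3 : p⁻¹ < p ^ 2 * n := by
      rw [hpinv, hP2, Real.rpow_lt_rpow_left_iff hn, hr, neg_neg]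
      have e : -(2 / ((s:ℝ)+1)) * 2 + 1 = 1 - 4 / ((s:ℝ)+1) := by ring
      have e2 : 2 / ((s:ℝ)+1) + 4 / ((s:ℝ)+1) = 6 / ((s:ℝ)+1) := by ring
      rw [e]; linarith
    have h2 : p ^ 2 * n ≤ scalingInd n p Hm {x,y} B := by
      rw [hP2, hSI, Real.rpow_le_rpow_left_iff hn]
      set cb : ℝ := ((b.choose 2 : ℕ) : ℝ) with hcbdef
      have key : 2 * (cb - d - 3) ≤ ((b:ℝ) - 3) * ((s:ℝ) + 1) := by
        nlinarith [mul_nonneg (by linarith : (0:ℝ) ≤ (b:ℝ) - 3)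
          (by linarith : (0:ℝ) ≤ (s:ℝ) + 1 - ((b:ℝ) + 2))]
      have hrmul : r * ((s:ℝ) + 1) = -2 := by
        rw [hr, neg_mul, div_mul_cancel₀ _ hq.ne']
      have hdiff : r * (cb - d - 1) + ((b:ℝ) - 2) - (r * 2 + 1)
          = (((b:ℝ) - 3) * ((s:ℝ) + 1) - 2 * (cb - d - 3)) / ((s:ℝ) + 1) := by
        rw [eq_div_iff hq.ne']
        linear_combination (cb - (d:ℝ) - 3) * hrmul
      have : 0 ≤ r * (cb - d - 1) + ((b:ℝ) - 2) - (r * 2 + 1) := by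
        rw [hdiff]; apply div_nonneg _ hq.le; linarith
      linarith
    exact ⟨lt_of_lt_of_le h3 h2, h2, h3⟩
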